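/- Let W, V_1, ..., V_n be a Nica-covariant isometric representation of the odometer semigroup O_n. Then for every 1 ≤ i ≤ n and j ≥ 0, there exist j' ≥ 0 and 1 ≤ i' ≤ n such that V_i* W^j = W^{j'} V_{i'}*; consequently ker(V_i* W^j) = ker V_{i'}*, and ⋂_{i=1}^n ⋂_{j≥0} ker(V_i* W^j) = ⋂_{i=1}^n ker V_i*. -/

import Mathlib

open ContinuousLinearMap

/-- For a Nica-covariant isometric representation `{W, V_1, …, V_n}` of `O_n`:
for every `i` and `j ≥ 0` there are `j' ≥ 0` and `i'` with `V_i* W^j = W^{j'} V_{i'}*`,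
hence `ker (V_i* W^j) = ker V_{i'}*`, and consequently
`⋂_i ⋂_j ker (V_i* W^j) = ⋂_i ker V_i*`. -/
theorem stmt_12 {H : Type*} [NormedAddCommGroup H] [InnerProductSpace ℂ H] [CompleteSpace H]
    (n : ℕ) (hn : 0 < n) (W : H →L[ℂ] H) (V : Fin n → H →L[ℂ] H)
    (hWiso : adjoint W ∘L W = 1)
    (hViso : ∀ i, adjoint (V i) ∘L V i = 1)
    (horth : ∀ i j, i ≠ j → adjoint (V i) ∘L V j = 0)
    (hWV : ∀ i : Fin n, ∀ h : (i : ℕ) + 1 < n, W ∘L V i = V ⟨(i : ℕ) + 1, h⟩)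
    (hWVn : W ∘L V ⟨n - 1, by omega⟩ = V ⟨0, hn⟩ ∘L W)
    (hNC : adjoint W ∘L V ⟨0, hn⟩ = V ⟨n - 1, by omega⟩ ∘L adjoint W) :
    (∀ i : Fin n, ∀ j : ℕ, ∃ j' : ℕ, ∃ i' : Fin n,
      adjoint (V i) ∘L W ^ j = (W ^ j' : H →L[ℂ] H) ∘L adjoint (V i') ∧
      LinearMap.ker (adjoint (V i) ∘L W ^ j : H →ₗ[ℂ] H) = LinearMap.ker (adjoint (V i') : H →ₗ[ℂ] H)) ∧
    (⨅ i : Fin n, ⨅ j : ℕ, LinearMap.ker (adjoint (V i) ∘L W ^ j : H →ₗ[ℂ] H)) =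
      ⨅ i : Fin n, LinearMap.ker (adjoint (V i) : H →ₗ[ℂ] H) := by
  -- W is injective
  have hWinj : Function.Injective W := by
    intro x y h
    have hx : adjoint W (W x) = x := by
      have := congrFun (congrArg DFunLike.coe hWiso) x
      simpa using this
    have hy : adjoint W (W y) = y := by
      have := congrFun (congrArg DFunLike.coe hWiso) y
      simpa using this
    rw [← hx, ← hy, h]
  have hWpowinj : ∀ j : ℕ, Function.Injective ((W ^ j : H →L[ℂ] H)) := by
    intro j
    induction j with
    | zero => simp [Function.Injective]
    | succ k ih =>
      intro x y h
      rw [pow_succ] at h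
      change (W ^ k) (W x) = (W ^ k) (W y) at h
      exact hWinj (ih h)
  -- the one-step move
  have step : ∀ i : Fin n, ∃ j'' : ℕ, ∃ i'' : Fin n,
      adjoint (V i) ∘L W = (W ^ j'' : H →L[ℂ] H) ∘L adjoint (V i'') := by
    intro i
    rcases Nat.eq_zero_or_pos (i : ℕ) with h0 | hpos
    · refine ⟨1, ⟨n - 1, by omega⟩, ?_⟩
      have hi : i = ⟨0, hn⟩ := Fin.ext h0
      have := congrArg adjoint hNC
      rw [adjoint_comp, adjoint_comp, adjoint_adjoint] at this
      rw [hi, this, pow_one]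
    · have hlt : (i : ℕ) - 1 + 1 < n := by omega
      refine ⟨0, ⟨(i : ℕ) - 1, by omega⟩, ?_⟩
      have hW := hWV ⟨(i : ℕ) - 1, by omega⟩ hlt
      have hi : (⟨(i : ℕ) - 1 + 1, hlt⟩ : Fin n) = i := Fin.ext (show (i:ℕ)-1+1 = (i:ℕ) by omega)
      rw [hi] at hW
      have := congrArg adjoint hW
      rw [adjoint_comp] at this
      rw [← this, comp_assoc, hWiso, pow_zero, ContinuousLinearMap.one_def, comp_id, id_comp]
  -- the main moving lemma
  have main : ∀ j : ℕ, ∀ i : Fin n, ∃ j' : ℕ, ∃ i' : Fin n,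
      adjoint (V i) ∘L W ^ j = (W ^ j' : H →L[ℂ] H) ∘L adjoint (V i') := by
    intro j
    induction j with
    | zero => intro i; exact ⟨0, i, rfl⟩
    | succ k ih =>
      intro i
      obtain ⟨j'', i'', h''⟩ := step i
      obtain ⟨j', i', h'⟩ := ih i''
      refine ⟨j'' + j', i', ?_⟩
      calc adjoint (V i) ∘L W ^ (k + 1)
          = (adjoint (V i) ∘L W) ∘L W ^ k := by
            rw [comp_assoc]; congr 1
            rw [pow_succ']; rfl
        _ = (W ^ j'' : H →L[ℂ] H) ∘L (adjoint (V i'') ∘L W ^ k) := by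
            rw [h'', comp_assoc]
        _ = (W ^ j'' : H →L[ℂ] H) ∘L ((W ^ j' : H →L[ℂ] H) ∘L adjoint (V i')) := by
            rw [h']
        _ = (W ^ (j'' + j') : H →L[ℂ] H) ∘L adjoint (V i') := by
            rw [← comp_assoc, pow_add]; rfl
  -- kernel of W^j ∘ A equals kernel of A
  have kerlem : ∀ (j : ℕ) (A : H →L[ℂ] H),
      LinearMap.ker ((W ^ j : H →L[ℂ] H) ∘L A : H →ₗ[ℂ] H) = LinearMap.ker (A : H →ₗ[ℂ] H) := by
    intro j A
    ext x
    simp only [LinearMap.mem_ker, ContinuousLinearMap.coe_coe, ContinuousLinearMap.coe_comp', Function.comp_apply]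
    constructor
    · intro h
      have : (W ^ j) (A x) = (W ^ j) 0 := by simpa using h
      exact hWpowinj j this
    · intro h; rw [h]; simp
  have part1 : ∀ i : Fin n, ∀ j : ℕ, ∃ j' : ℕ, ∃ i' : Fin n,
      adjoint (V i) ∘L W ^ j = (W ^ j' : H →L[ℂ] H) ∘L adjoint (V i') ∧
      LinearMap.ker (adjoint (V i) ∘L W ^ j : H →ₗ[ℂ] H) = LinearMap.ker (adjoint (V i') : H →ₗ[ℂ] H) := by
    intro i j
    obtain ⟨j', i', h⟩ := main j i
    exact ⟨j', i', h, by rw [h, kerlem]⟩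
  refine ⟨part1, le_antisymm ?_ ?_⟩
  · refine le_iInf fun i => ?_
    refine le_trans (iInf_le _ i) ?_
    refine le_trans (iInf_le _ 0) ?_
    simp [ContinuousLinearMap.one_def]
  · refine le_iInf fun i => le_iInf fun j => ?_
    obtain ⟨j', i', _, hker⟩ := part1 i j
    rw [hker]
    exact iInf_le _ i'
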